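/- Let φ : ℝ → ℝ be twice differentiable with φ″(u) = u·φ(u) for all u (Airy's equation), and suppose φ(u) → 0 and φ′(u) → 0 as u → +∞, and that for the given x, y ∈ ℝ the function s ↦ φ(x+s)·φ(y+s) is integrable on (0,∞). Then for x ≠ y the Airy kernel factorizes as a product of Hankel kernels: (φ(x)·φ′(y) − φ′(x)·φ(y))/(x − y) = ∫₀^∞ φ(x+s)·φ(y+s) ds. -/

import Mathlib

open MeasureTheory

/-- Factorization of the Airy kernel as a product of Hankel kernels:
`(φ(x)φ'(y) - φ'(x)φ(y))/(x - y) = ∫₀^∞ φ(x+s)φ(y+s) ds` for a solution of Airy's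
equation decaying at `+∞` (equations (6.52)–(6.53) of the paper, case `ℓ = 1`). -/
theorem airy_kernel_factorization
    (φ : ℝ → ℝ) (x y : ℝ)
    (hφ : Differentiable ℝ φ)
    (hairy : ∀ u : ℝ, HasDerivAt (deriv φ) (u * φ u) u)
    (h0 : Filter.Tendsto φ Filter.atTop (nhds 0))
    (h0' : Filter.Tendsto (deriv φ) Filter.atTop (nhds 0))
    (hint : IntegrableOn (fun s : ℝ => φ (x + s) * φ (y + s)) (Set.Ioi 0))
    (hxy : x ≠ y) :
    (φ x * deriv φ y - deriv φ x * φ y) / (x - y)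
      = ∫ s in Set.Ioi (0 : ℝ), φ (x + s) * φ (y + s) := by
  have hyx : y - x ≠ 0 := sub_ne_zero.mpr (Ne.symm hxy)
  set f : ℝ → ℝ := fun s =>
    (φ (x + s) * deriv φ (y + s) - deriv φ (x + s) * φ (y + s)) / (y - x) with hf
  have haddx : ∀ s : ℝ, Filter.Tendsto (fun s : ℝ => x + s) Filter.atTop Filter.atTop :=
    fun _ => Filter.tendsto_atTop_add_const_left _ _ Filter.tendsto_id
  have hderiv : ∀ s ∈ Set.Ici (0 : ℝ), HasDerivAt f (φ (x + s) * φ (y + s)) s := by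
    intro s _
    have hdx : HasDerivAt (fun s : ℝ => φ (x + s)) (deriv φ (x + s)) s := by
      simpa [Function.comp_def] using (hφ (x + s)).hasDerivAt.comp s ((hasDerivAt_id s).const_add x)
    have hdy : HasDerivAt (fun s : ℝ => φ (y + s)) (deriv φ (y + s)) s := by
      simpa [Function.comp_def] using (hφ (y + s)).hasDerivAt.comp s ((hasDerivAt_id s).const_add y)
    have hdx' : HasDerivAt (fun s : ℝ => deriv φ (x + s)) ((x + s) * φ (x + s)) s := by
      simpa [Function.comp_def] using (hairy (x + s)).comp s ((hasDerivAt_id s).const_add x)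
    have hdy' : HasDerivAt (fun s : ℝ => deriv φ (y + s)) ((y + s) * φ (y + s)) s := by
      simpa [Function.comp_def] using (hairy (y + s)).comp s ((hasDerivAt_id s).const_add y)
    have := ((hdx.mul hdy').sub (hdx'.mul hdy)).div_const (y - x)
    convert this using 1
    all_goals first | rfl | (field_simp; ring)
  have htend : Filter.Tendsto f Filter.atTop (nhds 0) := by
    have h1 : Filter.Tendsto (fun s : ℝ => φ (x + s) * deriv φ (y + s)
        - deriv φ (x + s) * φ (y + s)) Filter.atTop (nhds 0) := by
      have := ((h0.comp (haddx 0)).mul (h0'.comp (Filter.tendsto_atTop_add_const_left _ y Filter.tendsto_id))).sub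
        ((h0'.comp (haddx 0)).mul (h0.comp (Filter.tendsto_atTop_add_const_left _ y Filter.tendsto_id)))
      simpa using this
    simpa using h1.div_const (y - x)
  have key := integral_Ioi_of_hasDerivAt_of_tendsto' hderiv hint htend
  have hxy' : x - y ≠ 0 := sub_ne_zero.mpr hxy
  rw [key, hf, zero_sub]
  simp only [add_zero]
  rw [div_eq_iff hxy', show x - y = -(y - x) by ring, mul_neg, neg_mul, neg_neg,
    div_mul_cancel₀ _ hyx]
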